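/- For every integer m ≥ 0, the series Σ_{n≥0} φ²_{n,m} (2/27)^n converges and its sum equals Z²_m = ((2m)! / (m!(m+2)!)) · (9/4)^{m+1}. -/

import Mathlib

open Finset

/-- `U r n = (r+1) (3n+r)! / (n! (2n+r+1)!)`, the coefficients of `B(x)^(r+1)`
where `B` is the generating function of ternary trees. -/
noncomputable def fc (r n : ℕ) : ℝ :=
  ((r : ℝ) + 1) * Nat.factorial (3 * n + r) /
    (Nat.factorial n * Nat.factorial (2 * n + r + 1))

lemma factorial_cast_pos (n : ℕ) : (0:ℝ) < (Nat.factorial n : ℝ) := by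
  exact_mod_cast Nat.factorial_pos n

lemma fc_pos (r n : ℕ) : 0 < fc r n := by
  unfold fc
  positivity

lemma fc_zero (r : ℕ) : fc r 0 = 1 := by
  unfold fc
  simp [Nat.factorial]
  have h : (Nat.factorial r : ℝ) ≠ 0 := (factorial_cast_pos r).ne'
  have h2 : ((r:ℝ) + 1) ≠ 0 := by positivity
  field_simp
  exact ⟨h2, Nat.factorial_ne_zero r⟩

/-- Pascal-type identity, generic case. -/
lemma fc_pascal (s k : ℕ) : fc (s+1) (k+1) = fc s (k+1) + fc (s+3) k := by
  unfold fc
  have e1 : 3 * (k+1) + (s+1) = (3*k+s+3) + 1 := by ring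
  have e2 : 2 * (k+1) + (s+1) + 1 = (2*k+s+3) + 1 := by ring
  have e3 : 3 * (k+1) + s = (3*k+s) + 3 := by ring
  have e4 : 2 * (k+1) + s + 1 = (2*k+s+3) := by ring
  have e5 : 3 * k + (s+3) = (3*k+s) + 3 := by ring
  have e6 : 2 * k + (s+3) + 1 = (2*k+s+3) + 1 := by ring
  rw [e1, e2, e3, e4, e5, e6]
  have f1 : ((((3*k+s+3) + 1).factorial : ℕ) : ℝ)
      = ((3*k+s+3) + 1 : ℕ) * ((3*k+s+3).factorial) := by
    rw [Nat.factorial_succ]; push_cast; ring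
  have f2 : ((((3*k+s) + 3).factorial : ℕ) : ℝ)
      = ((3*k+s+3) : ℕ) * ((3*k+s+2) : ℕ) * ((3*k+s+1) : ℕ) * ((3*k+s).factorial) := by
    show (((3*k+s+2) + 1).factorial : ℝ) = _
    rw [Nat.factorial_succ, Nat.factorial_succ, Nat.factorial_succ]
    push_cast; ring
  have f3 : ((((2*k+s+3) + 1).factorial : ℕ) : ℝ)
      = ((2*k+s+3) + 1 : ℕ) * ((2*k+s+3).factorial) := by
    rw [Nat.factorial_succ]; push_cast; ring
  have f4 : (((k + 1).factorial : ℕ) : ℝ) = ((k:ℝ) + 1) * (k.factorial) := by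
    rw [Nat.factorial_succ]; push_cast; ring
  rw [f1, f2, f3, f4]
  have hk : ((k.factorial : ℕ) : ℝ) ≠ 0 := (factorial_cast_pos k).ne'
  have h1 : (((3*k+s).factorial : ℕ) : ℝ) ≠ 0 := (factorial_cast_pos _).ne'
  have h2 : (((2*k+s+3).factorial : ℕ) : ℝ) ≠ 0 := (factorial_cast_pos _).ne'
  have h3 : ((3*k+s+3 : ℕ) : ℝ) = 3*k+s+3 := by push_cast; ring
  push_cast
  field_simp
  ring

/-- Pascal-type identity, bottom case. -/
lemma fc_pascal0 (k : ℕ) : fc 0 (k+1) = fc 2 k := by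
  unfold fc
  have e1 : 3 * (k+1) + 0 = (3*k+2) + 1 := by ring
  have e2 : 2 * (k+1) + 0 + 1 = (2*k+2) + 1 := by ring
  have e3 : 2 * k + 2 + 1 = (2*k+2) + 1 := by ring
  rw [e1, e2, e3]
  have f1 : ((((3*k+2) + 1).factorial : ℕ) : ℝ)
      = ((3*k+2) + 1 : ℕ) * ((3*k+2).factorial) := by
    rw [Nat.factorial_succ]; push_cast; ring
  have f4 : (((k + 1).factorial : ℕ) : ℝ) = ((k:ℝ) + 1) * (k.factorial) := by
    rw [Nat.factorial_succ]; push_cast; ring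
  rw [f1, f4]
  have hk : ((k.factorial : ℕ) : ℝ) ≠ 0 := (factorial_cast_pos k).ne'
  have h1 : (((3*k+2).factorial : ℕ) : ℝ) ≠ 0 := (factorial_cast_pos _).ne'
  have h2 : ((((2*k+2)+1).factorial : ℕ) : ℝ) ≠ 0 := (factorial_cast_pos _).ne'
  push_cast
  field_simp
  ring


/-- key bound: `(3n+r)! ≤ (3/2)^r (27/4)^n n! (2n+r)!`, i.e. `C(3n+r,n) ≤ (3/2)^r (27/4)^n`. -/
lemma fact_bound : ∀ r n : ℕ, ((3*n+r).factorial : ℝ)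
    ≤ (3/2)^r * (27/4)^n * (n.factorial) * ((2*n+r).factorial) := by
  intro r
  induction r with
  | zero =>
    intro n
    induction n with
    | zero => simp
    | succ k ih =>
      have e1 : 3 * (k+1) + 0 = ((3*k+0) + 1) + 1 + 1 := by ring
      have e2 : 2 * (k+1) + 0 = ((2*k+0) + 1) + 1 := by ring
      rw [e1, e2]
      rw [Nat.factorial_succ, Nat.factorial_succ, Nat.factorial_succ,
          Nat.factorial_succ, Nat.factorial_succ, Nat.factorial_succ]
      push_cast
      have hf1 : (0:ℝ) < ((3*k+0).factorial : ℝ) := factorial_cast_pos _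
      have hf2 : (0:ℝ) < ((2*k+0).factorial : ℝ) := factorial_cast_pos _
      have hf3 : (0:ℝ) < (k.factorial : ℝ) := factorial_cast_pos _
      have hg : (0:ℝ) < (27/4:ℝ)^k := by positivity
      -- goal: (3k+3)(3k+2)(3k+1)·(3k)! ≤ (27/4)^{k+1}·(k+1)k!·(2k+2)(2k+1)(2k)!
      have key : ((3*(k:ℝ)+3)*(3*k+2)*(3*k+1)) * ((3*k+0).factorial : ℝ)
          ≤ (27/4) * ((k:ℝ)+1) * ((2*(k:ℝ)+2)*(2*k+1)) *
            ((27/4)^k * (k.factorial) * ((2*k+0).factorial)) := by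
        have hstep : ((3*(k:ℝ)+3)*(3*k+2)*(3*k+1))
            ≤ (27/4) * ((k:ℝ)+1) * ((2*(k:ℝ)+2)*(2*k+1)) := by nlinarith [sq_nonneg (k:ℝ)]
        have ihm : ((3*k+0).factorial : ℝ) ≤ (27/4)^k * (k.factorial) * ((2*k+0).factorial) := by
          have := ih; push_cast at this ⊢; nlinarith [this]
        have h0 : (0:ℝ) ≤ ((3*(k:ℝ)+3)*(3*k+2)*(3*k+1)) := by positivity
        calc ((3*(k:ℝ)+3)*(3*k+2)*(3*k+1)) * ((3*k+0).factorial : ℝ)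
            ≤ ((3*(k:ℝ)+3)*(3*k+2)*(3*k+1)) * ((27/4)^k * (k.factorial) * ((2*k+0).factorial)) :=
              by apply mul_le_mul_of_nonneg_left ihm h0
          _ ≤ _ := by
              apply mul_le_mul_of_nonneg_right hstep
              positivity
      simp only [Nat.add_zero, pow_zero, pow_succ, one_mul] at key ⊢
      push_cast at key ⊢
      nlinarith [key]
  | succ r ih =>
    intro n
    have e1 : 3*n + (r+1) = (3*n+r) + 1 := by ring
    have e2 : 2*n + (r+1) = (2*n+r) + 1 := by ring
    rw [e1, e2, Nat.factorial_succ, Nat.factorial_succ]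
    push_cast
    have hf1 : (0:ℝ) < ((3*n+r).factorial : ℝ) := factorial_cast_pos _
    have hf2 : (0:ℝ) < ((2*n+r).factorial : ℝ) := factorial_cast_pos _
    have hf3 : (0:ℝ) < (n.factorial : ℝ) := factorial_cast_pos _
    have ihm := ih n
    push_cast at ihm
    have hstep : (3*(n:ℝ)+r+1) ≤ (3/2) * (2*(n:ℝ)+r+1) := by nlinarith [Nat.cast_nonneg (α := ℝ) n]
    have h27 : (0:ℝ) < (3/2:ℝ)^r * (27/4)^n := by positivity
    calc (3*(n:ℝ)+r+1) * ((3*n+r).factorial : ℝ)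
        ≤ (3*(n:ℝ)+r+1) * ((3/2)^r * (27/4)^n * (n.factorial) * ((2*n+r).factorial)) := by
          apply mul_le_mul_of_nonneg_left ihm (by positivity)
      _ ≤ ((3/2) * (2*(n:ℝ)+r+1)) * ((3/2)^r * (27/4)^n * (n.factorial) * ((2*n+r).factorial)) := by
          apply mul_le_mul_of_nonneg_right hstep (by positivity)
      _ = (3/2)^(r+1) * (27/4)^n * (n.factorial) * ((2*(n:ℝ)+r+1) * ((2*n+r).factorial)) := by
          ring
      _ = _ := by ring

lemma fc_le (r n : ℕ) : fc r n ≤ (3/2)^r * (27/4)^n := by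
  unfold fc
  have e2 : 2*n + r + 1 = (2*n+r) + 1 := by ring
  rw [e2, Nat.factorial_succ]
  have hf1 : (0:ℝ) < ((3*n+r).factorial : ℝ) := factorial_cast_pos _
  have hf2 : (0:ℝ) < ((2*n+r).factorial : ℝ) := factorial_cast_pos _
  have hf3 : (0:ℝ) < (n.factorial : ℝ) := factorial_cast_pos _
  have hb := fact_bound r n
  push_cast
  rw [div_le_iff₀ (by positivity)]
  have h1 : ((r:ℝ)+1) ≤ (2*(n:ℝ)+r+1) := by
    have := Nat.cast_nonneg (α := ℝ) n; linarith
  nlinarith [mul_le_mul_of_nonneg_left hb (by positivity : (0:ℝ) ≤ ((r:ℝ)+1)),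
    mul_pos (mul_pos hf3 hf2) (by positivity : (0:ℝ) < (3/2:ℝ)^r * (27/4)^n)]

lemma fc_term_le {x : ℝ} (hx0 : 0 ≤ x) (r n : ℕ) :
    fc r n * x^n ≤ (3/2)^r * ((27/4)*x)^n := by
  have h1 : fc r n * x^n ≤ ((3/2)^r * (27/4)^n) * x^n :=
    mul_le_mul_of_nonneg_right (fc_le r n) (by positivity)
  calc fc r n * x^n ≤ ((3/2)^r * (27/4)^n) * x^n := h1
    _ = (3/2)^r * ((27/4)*x)^n := by rw [mul_pow, mul_assoc]

lemma fc_summable {x : ℝ} (hx0 : 0 ≤ x) (hx1 : x < 4/27) (r : ℕ) :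
    Summable (fun n => fc r n * x^n) := by
  refine Summable.of_nonneg_of_le
    (fun n => mul_nonneg (fc_pos r n).le (pow_nonneg hx0 n))
    (fun n => fc_term_le hx0 r n)
    ((summable_geometric_of_lt_one (by positivity) (by linarith)).mul_left _)

lemma fc_tsum_nonneg {x : ℝ} (hx0 : 0 ≤ x) (r : ℕ) :
    0 ≤ ∑' n, fc r n * x^n :=
  tsum_nonneg (fun n => mul_nonneg (fc_pos r n).le (pow_nonneg hx0 n))

lemma fc_tsum_le {x : ℝ} (hx0 : 0 ≤ x) (hx1 : x < 4/27) (r : ℕ) :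
    ∑' n, fc r n * x^n ≤ (3/2)^r * (1 - (27/4)*x)⁻¹ := by
  have hgs : Summable (fun n : ℕ => (3/2:ℝ)^r * ((27/4)*x)^n) :=
    (summable_geometric_of_lt_one (by positivity) (by linarith)).mul_left _
  have h := Summable.tsum_le_tsum (fun n => fc_term_le hx0 r n) (fc_summable hx0 hx1 r) hgs
  refine h.trans ?_
  rw [tsum_mul_left, tsum_geometric_of_lt_one (by positivity) (by linarith)]

lemma fc_tsum_rec {x : ℝ} (hx0 : 0 ≤ x) (hx1 : x < 4/27) (r : ℕ) :
    ∑' n, fc (r+1) n * x^n = (∑' n, fc r n * x^n) + x * ∑' n, fc (r+3) n * x^n := by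
  have S1 : Summable (fun k => fc r (k+1) * x^(k+1)) :=
    (summable_nat_add_iff 1).2 (fc_summable hx0 hx1 r)
  have S3 : Summable (fun k => fc (r+3) k * x^k) := fc_summable hx0 hx1 (r+3)
  have S2 : Summable (fun k => x * (fc (r+3) k * x^k)) := S3.mul_left x
  have h1 := Summable.tsum_eq_zero_add (fc_summable hx0 hx1 (r+1))
  have h2 := Summable.tsum_eq_zero_add (fc_summable hx0 hx1 r)
  simp only [fc_zero, pow_zero, one_mul] at h1 h2
  rw [h1]
  have hterm : ∀ k, fc (r+1) (k+1) * x^(k+1)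
      = fc r (k+1) * x^(k+1) + x * (fc (r+3) k * x^k) := by
    intro k
    rw [fc_pascal r k]
    ring
  calc 1 + ∑' k, fc (r+1) (k+1) * x^(k+1)
      = 1 + ∑' k, (fc r (k+1) * x^(k+1) + x * (fc (r+3) k * x^k)) := by
        congr 1; exact tsum_congr hterm
    _ = 1 + ((∑' k, fc r (k+1) * x^(k+1)) + ∑' k, x * (fc (r+3) k * x^k)) := by
        rw [Summable.tsum_add S1 S2]
    _ = 1 + ((∑' k, fc r (k+1) * x^(k+1)) + x * ∑' k, fc (r+3) k * x^k) := by
        rw [tsum_mul_left]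
    _ = _ := by rw [h2]; ring

lemma fc_tsum_rec0 {x : ℝ} (hx0 : 0 ≤ x) (hx1 : x < 4/27) :
    ∑' n, fc 0 n * x^n = 1 + x * ∑' n, fc 2 n * x^n := by
  have h1 := Summable.tsum_eq_zero_add (fc_summable hx0 hx1 0)
  simp only [fc_zero, pow_zero, one_mul] at h1
  rw [h1]
  congr 1
  calc ∑' k, fc 0 (k+1) * x^(k+1) = ∑' k, x * (fc 2 k * x^k) := by
        apply tsum_congr; intro k; rw [fc_pascal0 k]; ring
    _ = x * ∑' k, fc 2 k * x^k := tsum_mul_left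

/-- Main inside-radius identity. -/
lemma fc_tsum_eq {x b : ℝ} (hb1 : 1 < b) (hb2 : b < 3/2)
    (hx0 : 0 ≤ x) (hx1 : x < 4/27) (hroot : x * b^3 = b - 1) (r : ℕ) :
    ∑' n, fc r n * x^n = b^(r+1) := by
  have hb0 : (0:ℝ) < b := by linarith
  set T : ℕ → ℝ := fun r => ∑' n, fc r n * x^n with hTdef
  set D : ℕ → ℝ := fun r => T r - b^(r+1) with hDdef
  set e : ℕ → ℝ := fun r => |D r| * (2/3)^(r+1) with hedef
  have hpowmul : ∀ k : ℕ, (3/2:ℝ)^k * (2/3)^k = 1 := by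
    intro k; rw [← mul_pow]; norm_num
  have hM : ∀ r, e r ≤ (2/3) * (1 - (27/4)*x)⁻¹ + 1 := by
    intro r
    have hTnn : 0 ≤ T r := fc_tsum_nonneg hx0 r
    have hTle : T r ≤ (3/2)^r * (1 - (27/4)*x)⁻¹ := fc_tsum_le hx0 hx1 r
    have hble : b^(r+1) ≤ (3/2)^(r+1) :=
      pow_le_pow_left₀ (by linarith) (by linarith) _
    have hbnn : (0:ℝ) ≤ b^(r+1) := by positivity
    have habs : |D r| ≤ T r + b^(r+1) := by
      simp only [hDdef]
      rw [abs_sub_le_iff]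
      constructor <;> linarith
    have h1 : e r ≤ (T r + b^(r+1)) * (2/3)^(r+1) :=
      mul_le_mul_of_nonneg_right habs (by positivity)
    have hinv : (0:ℝ) < (1 - (27/4)*x)⁻¹ := by
      apply inv_pos.2; linarith
    have h2 : (T r + b^(r+1)) * (2/3)^(r+1)
        ≤ ((3/2)^r * (1 - (27/4)*x)⁻¹ + (3/2)^(r+1)) * (2/3)^(r+1) := by
      apply mul_le_mul_of_nonneg_right (by linarith) (by positivity)
    have h3 : ((3/2:ℝ)^r * (1 - (27/4)*x)⁻¹ + (3/2)^(r+1)) * (2/3)^(r+1)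
        = (2/3) * (1 - (27/4)*x)⁻¹ + 1 := by
      have e1 : ((3/2:ℝ)^r * (1 - (27/4)*x)⁻¹ + (3/2)^(r+1)) * (2/3)^(r+1)
          = ((3/2)^r * (2/3)^r) * ((2/3) * (1 - (27/4)*x)⁻¹)
            + ((3/2)^(r+1) * (2/3)^(r+1)) := by ring
      rw [e1, hpowmul r, hpowmul (r+1)]; ring
    linarith
  have hbdd : BddAbove (Set.range e) := by
    refine ⟨(2/3) * (1 - (27/4)*x)⁻¹ + 1, ?_⟩
    rintro y ⟨r, rfl⟩
    exact hM r
  set E : ℝ := ⨆ r, e r with hEdef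
  have hle : ∀ r, e r ≤ E := fun r => le_ciSup hbdd r
  have hE0 : 0 ≤ E := le_trans (by positivity) (hle 0)
  have hDrec : ∀ r, D (r+1) = D r + x * D (r+3) := by
    intro r
    have hb' : b^(r+1+1) = b^(r+1) + x * b^(r+3+1) := by
      calc b^(r+1+1) = b^(r+1) + (b-1) * b^(r+1) := by ring
        _ = b^(r+1) + (x * b^3) * b^(r+1) := by rw [hroot]
        _ = b^(r+1) + x * b^(r+3+1) := by ring
    simp only [hDdef, hTdef]
    rw [fc_tsum_rec hx0 hx1 r, hb']
    ring
  have hD0 : D 0 = x * D 2 := by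
    have hb' : b^(0+1) = 1 + x * b^(2+1) := by
      have : b^(0+1) = 1 + (b - 1) := by ring
      rw [this, ← hroot]; try ring
    simp only [hDdef, hTdef]
    rw [fc_tsum_rec0 hx0 hx1, hb']
    ring
  have hkey : ∀ r, e r ≤ (2/3 + (9/4)*x) * E := by
    intro r
    match r with
    | 0 =>
      have h0 : e 0 = ((9/4)*x) * e 2 := by
        simp only [hedef, hD0, abs_mul, abs_of_nonneg hx0]
        ring
      rw [h0]
      have h2 : e 2 ≤ E := hle 2
      have h2n : 0 ≤ e 2 := by simp only [hedef]; positivity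
      nlinarith
    | Nat.succ r =>
      have h1 : |D (r+1)| ≤ |D r| + x * |D (r+3)| := by
        rw [hDrec r]
        calc |D r + x * D (r+3)| ≤ |D r| + |x * D (r+3)| := abs_add_le _ _
          _ = |D r| + x * |D (r+3)| := by rw [abs_mul, abs_of_nonneg hx0]
      have h2 : e (r+1) ≤ (|D r| + x * |D (r+3)|) * (2/3)^(r+2) := by
        simp only [hedef]
        exact mul_le_mul_of_nonneg_right h1 (by positivity)
      have h3 : (|D r| + x * |D (r+3)|) * ((2:ℝ)/3)^(r+2)
          = (2/3) * (|D r| * (2/3)^(r+1)) + ((9/4)*x) * (|D (r+3)| * (2/3)^(r+4)) := by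
        ring
      have h4 : e r ≤ E := hle r
      have h5 : e (r+3) ≤ E := hle (r+3)
      have her : e r = |D r| * (2/3)^(r+1) := by simp only [hedef]
      have her3 : e (r+3) = |D (r+3)| * (2/3)^(r+4) := by simp only [hedef]
      calc e (r+1) ≤ (|D r| + x * |D (r+3)|) * (2/3)^(r+2) := h2
        _ = (2/3) * e r + ((9/4)*x) * e (r+3) := by rw [h3, her, her3]
        _ ≤ (2/3) * E + ((9/4)*x) * E := by
            have g1 := mul_le_mul_of_nonneg_left h5 (by positivity : (0:ℝ) ≤ (9/4)*x)
            have g2 := mul_le_mul_of_nonneg_left h4 (by norm_num : (0:ℝ) ≤ (2:ℝ)/3)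
            linarith
        _ = (2/3 + (9/4)*x) * E := by ring
  have hEθ : E ≤ (2/3 + (9/4)*x) * E := ciSup_le hkey
  have hθ : 2/3 + (9/4)*x < 1 := by linarith
  have hE : E ≤ 0 := by nlinarith
  have h1 : e r ≤ 0 := le_trans (hle r) hE
  have h2 : 0 ≤ e r := by simp only [hedef]; positivity
  have h4 : |D r| = 0 := by
    have h3 : e r = 0 := le_antisymm h1 h2
    simp only [hedef] at h3
    have hp : (0:ℝ) < (2/3:ℝ)^(r+1) := by positivity
    rcases mul_eq_zero.1 h3 with h | h
    · exact h
    · exact absurd h hp.ne'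
  have h5 : D r = 0 := abs_eq_zero.1 h4
  simp only [hDdef, hTdef] at h5
  linarith [h5]

lemma aux_x_lt {B : ℝ} (hB1 : 1 < B) (hB2 : B < 3/2) : (B-1)/B^3 < 4/27 := by
  have hB0 : (0:ℝ) < B := by linarith
  have hsq : (0:ℝ) < (2*B-3)^2 := by nlinarith
  rw [div_lt_iff₀ (pow_pos hB0 3)]
  nlinarith [mul_pos hsq (show (0:ℝ) < B+3 by linarith)]

open Filter in
/-- Endpoint evaluation: `∑ fc r n (4/27)ⁿ = (3/2)^(r+1)`. -/
lemma fc_hasSum (r : ℕ) :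
    HasSum (fun n => fc r n * (4/27:ℝ)^n) ((3/2:ℝ)^(r+1)) := by
  set b : ℕ → ℝ := fun k => 3/2 - ((k:ℝ)+3)⁻¹ with hbdef
  set x : ℕ → ℝ := fun k => (b k - 1)/(b k)^3 with hxdef
  have hinvpos : ∀ k : ℕ, (0:ℝ) < ((k:ℝ)+3)⁻¹ := by
    intro k; apply inv_pos.2; positivity
  have hinvle : ∀ k : ℕ, ((k:ℝ)+3)⁻¹ ≤ 1/3 := by
    intro k
    have h1 : (0:ℝ) < 3 := by norm_num
    have h2 : (3:ℝ) ≤ (k:ℝ)+3 := by linarith [Nat.cast_nonneg (α := ℝ) k]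
    have := inv_anti₀ h1 h2
    simpa using this
  have hb1 : ∀ k, 1 < b k := by
    intro k; have := hinvle k; simp only [hbdef]; linarith
  have hb2 : ∀ k, b k < 3/2 := by
    intro k; have := hinvpos k; simp only [hbdef]; linarith
  have hb0 : ∀ k, (0:ℝ) < b k := fun k => lt_trans one_pos (hb1 k)
  have hx0 : ∀ k, 0 ≤ x k := by
    intro k
    exact div_nonneg (by linarith [hb1 k]) (pow_nonneg (hb0 k).le 3)
  have hx1 : ∀ k, x k < 4/27 := fun k => aux_x_lt (hb1 k) (hb2 k)
  have hroot : ∀ k, x k * (b k)^3 = b k - 1 := by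
    intro k
    simp only [hxdef]
    rw [div_mul_cancel₀ _ (pow_ne_zero 3 (hb0 k).ne')]
  have Tval : ∀ k, ∑' n, fc r n * (x k)^n = (b k)^(r+1) :=
    fun k => fc_tsum_eq (hb1 k) (hb2 k) (hx0 k) (hx1 k) (hroot k) r
  have hblim : Tendsto b atTop (nhds (3/2)) := by
    have h1 : Tendsto (fun k : ℕ => ((k:ℝ)+3)) atTop atTop :=
      tendsto_atTop_add_const_right _ 3 tendsto_natCast_atTop_atTop
    have h2 : Tendsto (fun k : ℕ => ((k:ℝ)+3)⁻¹) atTop (nhds 0) :=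
      h1.inv_tendsto_atTop
    have h3 := h2.const_sub (3/2:ℝ)
    simpa using h3
  have hxlim : Tendsto x atTop (nhds (4/27)) := by
    have hnum : Tendsto (fun k => b k - 1) atTop (nhds (3/2 - 1)) := hblim.sub_const 1
    have hden : Tendsto (fun k => (b k)^3) atTop (nhds ((3/2:ℝ)^3)) := hblim.pow 3
    have h := hnum.div hden (by norm_num)
    have e : (4/27:ℝ) = (3/2 - 1)/(3/2)^3 := by norm_num
    rw [e]
    exact h
  have hxle : ∀ k, x k ≤ 4/27 := fun k => (hx1 k).le
  have hpartial : ∀ N : ℕ, ∑ n ∈ Finset.range N, fc r n * (4/27:ℝ)^n ≤ (3/2)^(r+1) := by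
    intro N
    have hk : ∀ k, ∑ n ∈ Finset.range N, fc r n * (x k)^n ≤ (3/2)^(r+1) := by
      intro k
      have h1 : ∑ n ∈ Finset.range N, fc r n * (x k)^n ≤ ∑' n, fc r n * (x k)^n :=
        Summable.sum_le_tsum _ (fun n _ => mul_nonneg (fc_pos r n).le (pow_nonneg (hx0 k) n))
          (fc_summable (hx0 k) (hx1 k) r)
      rw [Tval k] at h1
      exact h1.trans (pow_le_pow_left₀ (by linarith [hb0 k]) (by linarith [hb2 k]) _)
    have htend : Tendsto (fun k => ∑ n ∈ Finset.range N, fc r n * (x k)^n) atTop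
        (nhds (∑ n ∈ Finset.range N, fc r n * (4/27:ℝ)^n)) := by
      apply tendsto_finset_sum
      intro n _
      exact (hxlim.pow n).const_mul _
    exact le_of_tendsto htend (Eventually.of_forall hk)
  have hnonneg : ∀ n, 0 ≤ fc r n * (4/27:ℝ)^n :=
    fun n => mul_nonneg (fc_pos r n).le (by positivity)
  have hsummable : Summable (fun n => fc r n * (4/27:ℝ)^n) :=
    summable_of_sum_range_le hnonneg hpartial
  have hub : ∑' n, fc r n * (4/27:ℝ)^n ≤ (3/2)^(r+1) :=
    Summable.tsum_le_of_sum_range_le hsummable hpartial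
  have hlb : (3/2:ℝ)^(r+1) ≤ ∑' n, fc r n * (4/27:ℝ)^n := by
    have hk : ∀ k, (b k)^(r+1) ≤ ∑' n, fc r n * (4/27:ℝ)^n := by
      intro k
      rw [← Tval k]
      apply Summable.tsum_le_tsum _ (fc_summable (hx0 k) (hx1 k) r) hsummable
      intro n
      exact mul_le_mul_of_nonneg_left (pow_le_pow_left₀ (hx0 k) (hxle k) n) (fc_pos r n).le
    have htend : Tendsto (fun k => (b k)^(r+1)) atTop (nhds ((3/2:ℝ)^(r+1))) :=
      hblim.pow (r+1)
    exact le_of_tendsto htend (Eventually.of_forall hk)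
  have := hsummable.hasSum
  rwa [le_antisymm hub hlb] at this

/-- The number of rooted type II triangulations of a disc with m+2 boundary
vertices and n internal vertices. -/
noncomputable def phi2 (n m : ℕ) : ℝ :=
  (2 ^ (n + 1) * Nat.factorial (2 * m + 1) * Nat.factorial (2 * m + 3 * n) : ℝ) /
    ((Nat.factorial m) ^ 2 * Nat.factorial n * Nat.factorial (2 * m + 2 * n + 2))

lemma phi2_eq (n m : ℕ) : phi2 n m * (2/27:ℝ)^n
    = 2 * ((2*m+1).factorial : ℝ) * ((2*m+3*n).factorial)
      / (((m.factorial : ℝ))^2 * (n.factorial) * ((2*m+2*n+2).factorial)) * (4/27)^n := by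
  have h : (2:ℝ)^(n+1) * (2/27)^n = 2 * (4/27)^n := by
    rw [pow_succ, mul_comm ((2:ℝ)^n) 2, mul_assoc, ← mul_pow]
    norm_num
  calc phi2 n m * (2/27:ℝ)^n
      = ((2:ℝ)^(n+1) * (2/27)^n) * (((2*m+1).factorial : ℝ) * ((2*m+3*n).factorial)
        / (((m.factorial : ℝ))^2 * (n.factorial) * ((2*m+2*n+2).factorial))) := by
        unfold phi2; push_cast; ring
    _ = (2 * (4/27:ℝ)^n) * (((2*m+1).factorial : ℝ) * ((2*m+3*n).factorial)
        / (((m.factorial : ℝ))^2 * (n.factorial) * ((2*m+2*n+2).factorial))) := by rw [h]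
    _ = _ := by ring

/-- Σ_n φ²_{n,m} (2/27)^n = (2m)!/(m!(m+2)!) · (9/4)^{m+1}. -/
theorem Z2_critical (m : ℕ) :
    HasSum (fun n : ℕ => phi2 n m * (2 / 27 : ℝ) ^ n)
      ((Nat.factorial (2 * m) : ℝ) / (Nat.factorial m * Nat.factorial (m + 2)) *
        (9 / 4) ^ (m + 1)) := by
  have h1 := fc_hasSum (2*m)
  have h2 := fc_hasSum (2*m+1)
  have h3 := fc_hasSum (2*m+3)
  -- shifted version of h3
  have h3' : HasSum (fun n => fc (2*m+3) n * (4/27:ℝ)^(n+1)) ((4/27) * (3/2)^(2*m+3+1)) := by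
    have h := h3.mul_left (4/27)
    have e : (fun n => (4/27:ℝ) * (fc (2*m+3) n * (4/27:ℝ)^n))
        = (fun n => fc (2*m+3) n * (4/27:ℝ)^(n+1)) := by
      funext n; ring
    rwa [e] at h
  set V : ℕ → ℝ := fun n => if n = 0 then 0 else fc (2*m+3) (n-1) * (4/27:ℝ)^n with hVdef
  have hVs : HasSum V ((4/27) * (3/2)^(2*m+3+1)) := by
    have hshift : (fun n => V (n+1)) = (fun n => fc (2*m+3) n * (4/27:ℝ)^(n+1)) := by
      funext n; simp only [hVdef, Nat.succ_ne_zero, if_false, Nat.add_sub_cancel]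
    have h := (hasSum_nat_add_iff (f := V) 1).1 (by rw [hshift]; exact h3')
    simpa [hVdef] using h
  set c : ℝ := 2 * (Nat.factorial (2*m+1)) / (Nat.factorial m)^2 with hcdef
  have H := (((h1.div_const (2*(m:ℝ)+1)).add (hVs.div_const (2*(m:ℝ)+4))).sub
      (h2.div_const (2*(m:ℝ)+2))).mul_left c
  -- identify the function
  have hfun : (fun n => c * ((fc (2*m) n * (4/27:ℝ)^n) / (2*(m:ℝ)+1) + V n / (2*(m:ℝ)+4)
      - (fc (2*m+1) n * (4/27:ℝ)^n) / (2*(m:ℝ)+2)))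
      = (fun n : ℕ => phi2 n m * (2 / 27 : ℝ) ^ n) := by
    funext n
    have hm : (0:ℝ) < (Nat.factorial m : ℝ) := factorial_cast_pos m
    match n with
    | 0 =>
      rw [phi2_eq 0 m]
      simp only [hVdef, if_pos rfl, pow_zero, mul_one, fc_zero, mul_zero]
      simp only [Nat.add_zero]
      have e1 : 2*m + 2 = ((2*m) + 1) + 1 := by ring
      rw [e1, Nat.factorial_succ ((2*m)+1), Nat.factorial_succ (2*m)]
      have h2m : (0:ℝ) < ((2*m).factorial : ℝ) := factorial_cast_pos _
      rw [hcdef, Nat.factorial_succ (2*m)]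
      push_cast
      rw [Nat.factorial_zero]
      field_simp
      ring
    | Nat.succ k =>
      simp only [hVdef, Nat.succ_eq_add_one, Nat.succ_ne_zero, if_false, Nat.add_sub_cancel]
      rw [phi2_eq (k+1) m]
      unfold fc
      -- canonicalize factorial arguments
      have e1 : 3*(k+1) + 2*m = (3*k+2*m+3) := by ring
      have e2 : 2*(k+1) + 2*m + 1 = (2*k+2*m+3) := by ring
      have e3 : 3*k + (2*m+3) = (3*k+2*m+3) := by ring
      have e4 : 2*k + (2*m+3) + 1 = (2*k+2*m+3) + 1 := by ring
      have e5 : 3*(k+1) + (2*m+1) = (3*k+2*m+3) + 1 := by ring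
      have e6 : 2*(k+1) + (2*m+1) + 1 = (2*k+2*m+3) + 1 := by ring
      have e7 : 2*m + 3*(k+1) = (3*k+2*m+3) := by ring
      have e8 : 2*m + 2*(k+1) + 2 = (2*k+2*m+3) + 1 := by ring
      rw [e1, e2, e3, e4, e5, e6, e7, e8]
      rw [Nat.factorial_succ (3*k+2*m+3), Nat.factorial_succ (2*k+2*m+3),
          Nat.factorial_succ k]
      rw [hcdef]
      have hA : ((3*k+2*m+3).factorial : ℝ) ≠ 0 := (factorial_cast_pos _).ne'
      have hB : ((2*k+2*m+3).factorial : ℝ) ≠ 0 := (factorial_cast_pos _).ne'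
      have hk : ((k.factorial : ℕ) : ℝ) ≠ 0 := (factorial_cast_pos _).ne'
      have hmne : ((m.factorial : ℕ) : ℝ) ≠ 0 := (factorial_cast_pos _).ne'
      push_cast
      field_simp
      ring
  rw [hfun] at H
  -- identify the value
  have hval : c * ((3/2:ℝ)^(2*m+1) / (2*(m:ℝ)+1) + (4/27) * (3/2)^(2*m+3+1) / (2*(m:ℝ)+4)
      - (3/2)^(2*m+1+1) / (2*(m:ℝ)+2))
      = ((Nat.factorial (2 * m) : ℝ) / (Nat.factorial m * Nat.factorial (m + 2)) *
        (9 / 4) ^ (m + 1)) := by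
    have hm : (0:ℝ) < (Nat.factorial m : ℝ) := factorial_cast_pos m
    have h2m : (0:ℝ) < ((2*m).factorial : ℝ) := factorial_cast_pos _
    have hP : ((9:ℝ)/4)^(m+1) = (3/2)^(2*m) * (9/4) := by
      rw [pow_succ]
      congr 1
      rw [show (9:ℝ)/4 = (3/2)^2 by norm_num, ← pow_mul]
    have hp1 : (3/2:ℝ)^(2*m+1) = (3/2)^(2*m) * (3/2) := by rw [pow_succ]
    have hp2 : (3/2:ℝ)^(2*m+1+1) = (3/2)^(2*m) * (9/4) := by
      rw [pow_succ, pow_succ]; ring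
    have hp4 : (3/2:ℝ)^(2*m+3+1) = (3/2)^(2*m) * (81/16) := by
      rw [show 2*m+3+1 = 2*m + 4 by ring, pow_add]
      norm_num
    have hfac1 : ((2*m+1).factorial : ℝ) = ((2*m:ℝ)+1) * ((2*m).factorial) := by
      rw [Nat.factorial_succ]; push_cast; ring
    have hfac2 : ((m+2).factorial : ℝ) = ((m:ℝ)+2) * ((m:ℝ)+1) * (m.factorial) := by
      rw [Nat.factorial_succ, Nat.factorial_succ]; push_cast; ring
    rw [hcdef, hP, hp1, hp2, hp4, hfac1, hfac2]
    have hQ : (0:ℝ) < (3/2:ℝ)^(2*m) := by positivity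
    have hm1 : (0:ℝ) < (m:ℝ)+1 := by positivity
    have hm2 : (0:ℝ) < (m:ℝ)+2 := by positivity
    have h2m1 : (0:ℝ) < 2*(m:ℝ)+1 := by positivity
    have h2m2 : (0:ℝ) < 2*(m:ℝ)+2 := by positivity
    have h2m4 : (0:ℝ) < 2*(m:ℝ)+4 := by positivity
    field_simp
    ring
  rw [hval] at H
  exact H
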